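/- For each n ≥ 1 and real t, the quadrature weight R_i^{(n)}(t) = -(2π/n)·Σ_{m=1}^{n-1} (1/m)·cos(m(t - t_i)) - (π/n²)·cos(n(t - t_i)) satisfies the exactness property: for every trigonometric monomial f(τ) = cos(mτ) or sin(mτ) with 0 ≤ m ≤ n-1, Σ_{i=0}^{2n-1} R_i^{(n)}(t)·f(t_i) = ∫₀^{2π} ln(4 sin²((t-τ)/2))·f(τ) dτ, where t_i = iπ/n. -/

import Mathlib

open Real Filter MeasureTheory Set intervalIntegral Topology

namespace Stmt16

/-- `log` is interval integrable on `[0, b]` for `b > 0`. -/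
lemma log_integrable {b : ℝ} (hb : 0 < b) : IntervalIntegrable Real.log volume 0 b := by
  have h1 : IntervalIntegrable Real.log volume 0 1 := by
    have hcont : ContinuousOn (fun x : ℝ => x - x * Real.log x) (Icc 0 1) :=
      (continuous_id.sub Real.continuous_mul_log).continuousOn
    have hderiv : ∀ x ∈ Ioo (0:ℝ) 1,
        HasDerivAt (fun x : ℝ => x - x * Real.log x) (-Real.log x) x := by
      intro x hx
      have h := (hasDerivAt_id x).sub (Real.hasDerivAt_mul_log hx.1.ne')
      exact h.congr_deriv (by ring)
    have hpos : ∀ x ∈ Ioo (0:ℝ) 1, 0 ≤ -Real.log x := by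
      intro x hx
      simpa using Real.log_nonpos hx.1.le hx.2.le
    have hInt := integrableOn_deriv_of_nonneg hcont hderiv hpos
    have h2 : IntegrableOn (fun x => Real.log x) (Ioc (0:ℝ) 1) volume := by
      have h3 := hInt.neg
      have he : (-fun x : ℝ => -Real.log x) = (fun x : ℝ => Real.log x) := by
        funext x; simp
      rwa [he] at h3
    rw [intervalIntegrable_iff_integrableOn_Ioc_of_le (by norm_num)]
    exact h2
  rcases le_total b 1 with h | h
  · refine h1.mono_set ?_
    rw [uIcc_of_le hb.le, uIcc_of_le (by norm_num : (0:ℝ) ≤ 1)]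
    exact Icc_subset_Icc le_rfl h
  · refine h1.trans ?_
    refine intervalIntegrable_log ?_
    rw [uIcc_of_le h]
    intro h0
    exact absurd h0.1 (by norm_num)

lemma hFc (τ : ℝ) :
    Real.log (4 * Real.sin (τ/2)^2) = 2 * Real.log (2 * Real.sin (τ/2)) := by
  rw [show (4:ℝ) * Real.sin (τ/2)^2 = (2*Real.sin (τ/2))^2 by ring, Real.log_pow]
  push_cast; ring

/-- integrability of `log (2 sin (τ/2))` on `[0, π]`. -/
lemma L_int_pi : IntervalIntegrable (fun τ => Real.log (2*Real.sin (τ/2))) volume 0 π := by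
  have hg0 : IntervalIntegrable (fun τ => 2*Real.log π - Real.log τ) volume 0 π :=
    (_root_.intervalIntegrable_const).sub (log_integrable pi_pos)
  refine hg0.mono_fun' ?_ ?_
  · exact ((Real.measurable_log.comp (by measurability)).aestronglyMeasurable)
  · rw [uIoc_of_le pi_pos.le]
    filter_upwards [ae_restrict_mem measurableSet_Ioc] with τ hτ
    obtain ⟨h0, hπ⟩ := hτ
    have hs1 : 2*Real.sin (τ/2) ≤ τ := by
      have := Real.sin_le (by positivity : 0 ≤ τ/2)
      linarith
    have hs2 : 2*τ/π ≤ 2*Real.sin (τ/2) := by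
      have := Real.mul_le_sin (x := τ/2) (by positivity) (by linarith)
      have hπ0 := pi_pos
      rw [div_mul_eq_mul_div, mul_comm] at this
      calc 2*τ/π = 2*(τ/2*2/π) := by ring
        _ ≤ 2*Real.sin (τ/2) := by
            rw [mul_le_mul_iff_right₀ (by norm_num : (0:ℝ) < 2)]
            calc τ/2*2/π = 2/π * (τ/2) := by ring
              _ ≤ Real.sin (τ/2) := Real.mul_le_sin (by positivity) (by linarith)
    have hpos : (0:ℝ) < 2*τ/π := by positivity
    have hlogπ : 0 ≤ Real.log π := Real.log_nonneg (by linarith [pi_gt_three])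
    have hup : Real.log (2*Real.sin (τ/2)) ≤ Real.log τ :=
      Real.log_le_log (by linarith) hs1
    have hlow : Real.log (2*τ/π) ≤ Real.log (2*Real.sin (τ/2)) :=
      Real.log_le_log hpos hs2
    have hval : Real.log (2*τ/π) = Real.log 2 + Real.log τ - Real.log π := by
      rw [Real.log_div (by positivity) (by positivity), Real.log_mul (by norm_num) h0.ne']
    have hlog2 : 0 ≤ Real.log 2 := Real.log_nonneg (by norm_num)
    have hτπ : Real.log τ ≤ Real.log π := Real.log_le_log h0 hπ
    rw [Real.norm_eq_abs, abs_le]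
    constructor
    · nlinarith
    · nlinarith


/-- reflection: `log(2 sin((2π-τ)/2)) = log(2 sin(τ/2))` for all `τ`. -/
lemma L_reflect : (fun τ => Real.log (2*Real.sin ((2*π - τ)/2)))
    = (fun τ => Real.log (2*Real.sin (τ/2))) := by
  funext τ
  rw [show (2*π - τ)/2 = π - τ/2 by ring, Real.sin_pi_sub]

lemma L_int : IntervalIntegrable (fun τ => Real.log (2*Real.sin (τ/2))) volume 0 (2*π) := by
  have h2 : IntervalIntegrable (fun τ => Real.log (2*Real.sin (τ/2))) volume π (2*π) := by
    have := (L_int_pi.comp_sub_left (2*π))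
    rw [L_reflect] at this
    have h2π : 2*π - π = π := by ring
    have h20 : 2*π - 0 = 2*π := by ring
    rw [h2π, h20] at this
    exact this.symm
  exact L_int_pi.trans h2

/-- integrability of `log(4 sin²(τ/2)) * g τ` for continuous `g`, on any subinterval
of `[0, 2π]`. -/
lemma Fg_int {g : ℝ → ℝ} (hg : Continuous g) {a b : ℝ}
    (hsub : Set.uIcc a b ⊆ Set.uIcc 0 (2*π)) :
    IntervalIntegrable (fun τ => Real.log (4*Real.sin (τ/2)^2) * g τ) volume a b := by
  have h1 : IntervalIntegrable (fun τ => Real.log (2*Real.sin (τ/2))) volume a b :=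
    L_int.mono_set hsub
  have h2 := (h1.mul_continuousOn (hg.continuousOn)).const_mul 2
  refine h2.congr ?_
  intro τ _
  dsimp only
  rw [hFc]; ring


lemma tendsto_L_sin (m : ℕ) (p : ℝ) (hp : Real.sin (p/2) = 0) (hc : Real.cos (p/2) ≠ 0)
    (hsm : Real.sin (m*p) = 0) :
    Tendsto (fun τ => Real.log (2*Real.sin (τ/2)) * Real.sin (m*τ)) (𝓝[≠] p) (𝓝 0) := by
  set u : ℝ → ℝ := fun τ => 2*Real.sin (τ/2) with hu
  have hup : u p = 0 := by simp [hu, hp]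
  have du : HasDerivAt u (Real.cos (p/2)) p := by
    have h := ((Real.hasDerivAt_sin (p/2)).comp p ((hasDerivAt_id p).div_const 2)).const_mul 2
    exact h.congr_deriv (by ring)
  have dv : HasDerivAt (fun τ => Real.sin ((m:ℝ)*τ)) ((m:ℝ) * Real.cos (m*p)) p := by
    have h := (Real.hasDerivAt_sin ((m:ℝ)*p)).comp p ((hasDerivAt_id p).const_mul (m:ℝ))
    exact h.congr_deriv (by ring)
  have hslope_u : Tendsto (fun τ => u τ / (τ - p)) (𝓝[≠] p) (𝓝 (Real.cos (p/2))) := by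
    refine (hasDerivAt_iff_tendsto_slope.mp du).congr' ?_
    filter_upwards [self_mem_nhdsWithin] with τ hτ
    rw [slope_def_field, hup, sub_zero]
  have hslope_v : Tendsto (fun τ => Real.sin ((m:ℝ)*τ) / (τ - p)) (𝓝[≠] p)
      (𝓝 ((m:ℝ) * Real.cos (m*p))) := by
    refine (hasDerivAt_iff_tendsto_slope.mp dv).congr' ?_
    filter_upwards [self_mem_nhdsWithin] with τ hτ
    rw [slope_def_field, hsm, sub_zero]
  have hinv : Tendsto (fun τ => (τ - p) / u τ) (𝓝[≠] p) (𝓝 (Real.cos (p/2))⁻¹) := by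
    have := hslope_u.inv₀ hc
    refine this.congr ?_
    intro τ; rw [inv_div]
  have h1 : Tendsto (fun τ => u τ * Real.log (u τ)) (𝓝[≠] p) (𝓝 0) := by
    have hcont : Continuous (fun τ => u τ * Real.log (u τ)) :=
      Real.continuous_mul_log.comp (by fun_prop)
    have := hcont.tendsto p
    rw [show u p * Real.log (u p) = 0 by rw [hup]; simp] at this
    exact this.mono_left nhdsWithin_le_nhds
  have hune : ∀ᶠ τ in 𝓝[≠] p, u τ ≠ 0 := by
    filter_upwards [hslope_u.eventually_ne hc] with τ hτ
    intro h0; apply hτ; rw [h0, zero_div]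
  have hmain := h1.mul (hslope_v.mul hinv)
  rw [zero_mul] at hmain
  refine hmain.congr' ?_
  filter_upwards [hune, self_mem_nhdsWithin] with τ h0 hτ
  have hne : τ - p ≠ 0 := sub_ne_zero.mpr hτ
  field_simp
  ring

lemma tendsto_L_sin_zero (m : ℕ) :
    Tendsto (fun τ => Real.log (2*Real.sin (τ/2)) * Real.sin ((m:ℝ)*τ)) (𝓝[>] 0) (𝓝 0) := by
  refine (tendsto_L_sin m 0 (by simp) (by simp) (by simp)).mono_left
    (nhdsWithin_mono _ ?_)
  intro x hx
  simp only [Set.mem_compl_iff, Set.mem_singleton_iff]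
  exact ne_of_gt hx

lemma tendsto_L_sin_two_pi (m : ℕ) :
    Tendsto (fun τ => Real.log (2*Real.sin (τ/2)) * Real.sin ((m:ℝ)*τ)) (𝓝[<] (2*π)) (𝓝 0) := by
  have hp : Real.sin ((2*π)/2) = 0 := by rw [show (2*π)/2 = π by ring]; exact Real.sin_pi
  have hc : Real.cos ((2*π)/2) ≠ 0 := by
    rw [show (2*π)/2 = π by ring, Real.cos_pi]; norm_num
  have hsm : Real.sin ((m:ℝ)*(2*π)) = 0 := by
    rw [show (m:ℝ)*(2*π) = ((2*m : ℕ) : ℝ)*π by push_cast; ring]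
    exact Real.sin_nat_mul_pi _
  refine (tendsto_L_sin m (2*π) hp hc hsm).mono_left (nhdsWithin_mono _ ?_)
  intro x hx
  simp only [Set.mem_compl_iff, Set.mem_singleton_iff]
  exact ne_of_lt hx


lemma Icc_sum_top {m : ℕ} (hm : 1 ≤ m) (f : ℕ → ℝ) :
    ∑ k ∈ Finset.Icc 1 m, f k = (∑ k ∈ Finset.Icc 1 (m-1), f k) + f m := by
  obtain ⟨m', rfl⟩ : ∃ m', m = m'+1 := ⟨m-1, by omega⟩
  rw [Finset.sum_Icc_succ_top (by omega : 1 ≤ m'+1)]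
  simp

lemma cot_id (m : ℕ) (hm : 1 ≤ m) (τ : ℝ) :
    Real.cos (τ/2) * Real.sin ((m:ℝ)*τ) =
    Real.sin (τ/2) * (1 + 2*∑ k ∈ Finset.Icc 1 (m-1), Real.cos ((k:ℝ)*τ) + Real.cos ((m:ℝ)*τ)) := by
  induction m, hm using Nat.le_induction with
  | base =>
    simp only [Nat.cast_one, one_mul]
    norm_num
    have h1 : Real.sin τ = 2*Real.sin (τ/2)*Real.cos (τ/2) := by
      nth_rewrite 1 [show τ = 2*(τ/2) by ring]
      exact Real.sin_two_mul (τ/2)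
    have h2 : Real.cos τ = 2*Real.cos (τ/2)^2 - 1 := by
      nth_rewrite 1 [show τ = 2*(τ/2) by ring]
      exact Real.cos_two_mul (τ/2)
    rw [h1, h2]; ring
  | succ m hm ih =>
    have hred : (m + 1) - 1 = m := by omega
    rw [hred, Icc_sum_top hm]
    have h1 : Real.sin τ = 2*Real.sin (τ/2)*Real.cos (τ/2) := by
      nth_rewrite 1 [show τ = 2*(τ/2) by ring]
      exact Real.sin_two_mul (τ/2)
    have h2 : Real.cos τ = 2*Real.cos (τ/2)^2 - 1 := by
      nth_rewrite 1 [show τ = 2*(τ/2) by ring]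
      exact Real.cos_two_mul (τ/2)
    have hpyth := Real.sin_sq_add_cos_sq (τ/2)
    push_cast
    rw [show ((m:ℝ)+1)*τ = (m:ℝ)*τ + τ by ring, Real.sin_add, Real.cos_add, h1, h2]
    linear_combination ih + (2*Real.cos (τ/2)*Real.sin ((m:ℝ)*τ)) * hpyth


lemma sin_nat_two_pi (k : ℕ) : Real.sin ((k:ℝ)*(2*π)) = 0 := by
  rw [show ((k:ℝ))*(2*π) = ((2*k:ℕ):ℝ)*π by push_cast; ring]
  exact Real.sin_nat_mul_pi _

lemma cosCoeff (m : ℕ) (hm : 1 ≤ m) :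
    ∫ τ in (0:ℝ)..(2*π), Real.log (4*Real.sin (τ/2)^2) * Real.cos ((m:ℝ)*τ)
      = -(2*π/m) := by
  have hm0 : (m:ℝ) ≠ 0 := Nat.cast_ne_zero.mpr (by omega)
  set H : ℝ → ℝ := fun τ =>
    (2/m) * (Real.log (2*Real.sin (τ/2)) * Real.sin ((m:ℝ)*τ))
    - (1/m) * (τ + 2*∑ k ∈ Finset.Icc 1 (m-1), Real.sin ((k:ℝ)*τ)/k + Real.sin ((m:ℝ)*τ)/m)
    with hH
  have hderiv : ∀ τ ∈ Ioo (0:ℝ) (2*π),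
      HasDerivAt H (Real.log (4*Real.sin (τ/2)^2) * Real.cos ((m:ℝ)*τ)) τ := by
    intro τ hτ
    have hs : 0 < Real.sin (τ/2) :=
      Real.sin_pos_of_pos_of_lt_pi (by linarith [hτ.1]) (by linarith [hτ.2])
    have hu : (2*Real.sin (τ/2)) ≠ 0 := by positivity
    have d1 : HasDerivAt (fun τ => 2*Real.sin (τ/2)) (Real.cos (τ/2)) τ := by
      have h := ((Real.hasDerivAt_sin (τ/2)).comp τ ((hasDerivAt_id τ).div_const 2)).const_mul 2
      exact h.congr_deriv (by ring)
    have d2 : HasDerivAt (fun τ => Real.log (2*Real.sin (τ/2)))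
        (Real.cos (τ/2) / (2*Real.sin (τ/2))) τ := d1.log hu
    have d3 : HasDerivAt (fun τ => Real.sin ((m:ℝ)*τ)) ((m:ℝ)*Real.cos ((m:ℝ)*τ)) τ := by
      have h := (Real.hasDerivAt_sin ((m:ℝ)*τ)).comp τ ((hasDerivAt_id τ).const_mul (m:ℝ))
      exact h.congr_deriv (by ring)
    have dsum : HasDerivAt (fun τ => ∑ k ∈ Finset.Icc 1 (m-1), Real.sin ((k:ℝ)*τ)/k)
        (∑ k ∈ Finset.Icc 1 (m-1), Real.cos ((k:ℝ)*τ)) τ := by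
      refine HasDerivAt.fun_sum ?_
      intro k hk
      have hk1 : (1:ℕ) ≤ k := (Finset.mem_Icc.mp hk).1
      have hk0 : (k:ℝ) ≠ 0 := Nat.cast_ne_zero.mpr (by omega)
      have h := ((Real.hasDerivAt_sin ((k:ℝ)*τ)).comp τ
        ((hasDerivAt_id τ).const_mul (k:ℝ))).div_const (k:ℝ)
      exact h.congr_deriv (by rw [mul_one, mul_div_cancel_right₀ _ hk0])
    have dpoly : HasDerivAt
        (fun τ => τ + 2*∑ k ∈ Finset.Icc 1 (m-1), Real.sin ((k:ℝ)*τ)/k + Real.sin ((m:ℝ)*τ)/m)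
        (1 + 2*∑ k ∈ Finset.Icc 1 (m-1), Real.cos ((k:ℝ)*τ) + Real.cos ((m:ℝ)*τ)) τ := by
      have h := ((hasDerivAt_id τ).add (dsum.const_mul 2)).add (d3.div_const (m:ℝ))
      exact h.congr_deriv (by rw [mul_div_cancel_left₀ _ hm0])
    have dH := ((d2.mul d3).const_mul (2/(m:ℝ))).sub (dpoly.const_mul (1/(m:ℝ)))
    rw [hH]
    refine dH.congr_deriv ?_
    symm
    have hcot := cot_id m hm τ
    rw [hFc]
    field_simp
    simp only [mul_comm τ]
    linear_combination (-1:ℝ) * hcot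
  have hint : IntervalIntegrable
      (fun τ => Real.log (4*Real.sin (τ/2)^2) * Real.cos ((m:ℝ)*τ)) volume 0 (2*π) :=
    Fg_int (by fun_prop) subset_rfl
  have hpolyc : Continuous (fun τ:ℝ =>
      τ + 2*∑ k ∈ Finset.Icc 1 (m-1), Real.sin ((k:ℝ)*τ)/k + Real.sin ((m:ℝ)*τ)/m) := by
    fun_prop
  have ha : Tendsto H (𝓝[>] (0:ℝ)) (𝓝 0) := by
    rw [hH]
    have h1 := (tendsto_L_sin_zero m).const_mul (2/(m:ℝ))
    have h2 : Tendsto (fun τ:ℝ =>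
        τ + 2*∑ k ∈ Finset.Icc 1 (m-1), Real.sin ((k:ℝ)*τ)/k + Real.sin ((m:ℝ)*τ)/m)
        (𝓝[>] (0:ℝ)) (𝓝 0) := by
      have h3 := (hpolyc.tendsto 0).mono_left (nhdsWithin_le_nhds (s := Ioi (0:ℝ)))
      simpa using h3
    simpa using h1.sub (h2.const_mul (1/(m:ℝ)))
  have hb : Tendsto H (𝓝[<] (2*π)) (𝓝 (-(2*π/m))) := by
    rw [hH]
    have h1 := (tendsto_L_sin_two_pi m).const_mul (2/(m:ℝ))
    have h2 : Tendsto (fun τ:ℝ =>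
        τ + 2*∑ k ∈ Finset.Icc 1 (m-1), Real.sin ((k:ℝ)*τ)/k + Real.sin ((m:ℝ)*τ)/m)
        (𝓝[<] (2*π)) (𝓝 (2*π)) := by
      have h3 := (hpolyc.tendsto (2*π)).mono_left (nhdsWithin_le_nhds (s := Iio (2*π)))
      have hv : 2*π + 2*∑ k ∈ Finset.Icc 1 (m-1), Real.sin ((k:ℝ)*(2*π))/k
          + Real.sin ((m:ℝ)*(2*π))/m = 2*π := by
        simp [sin_nat_two_pi]
      rwa [hv] at h3
    have := h1.sub (h2.const_mul (1/(m:ℝ)))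
    rw [show (2/(m:ℝ)) * 0 - (1/(m:ℝ))*(2*π) = -(2*π/m) by field_simp; ring] at this
    exact this
  rw [integral_eq_sub_of_hasDerivAt_of_tendsto (by positivity) hderiv hint ha hb]
  ring


lemma sinCoeff (m : ℕ) :
    ∫ τ in (0:ℝ)..(2*π), Real.log (4*Real.sin (τ/2)^2) * Real.sin ((m:ℝ)*τ) = 0 := by
  set F : ℝ → ℝ := fun τ => Real.log (4*Real.sin (τ/2)^2) * Real.sin ((m:ℝ)*τ) with hF
  have h := intervalIntegral.integral_comp_sub_left (a := (0:ℝ)) (b := 2*π) F (2*π)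
  rw [sub_self, sub_zero] at h
  have key : ∀ x, F (2*π - x) = -(F x) := by
    intro x
    rw [hF]
    simp only []
    rw [show (2*π - x)/2 = π - x/2 by ring, Real.sin_pi_sub,
        show (m:ℝ)*(2*π - x) = (m:ℝ)*(2*π) - (m:ℝ)*x by ring, Real.sin_sub,
        sin_nat_two_pi, Real.cos_nat_mul_two_pi]
    ring
  simp only [key] at h
  rw [intervalIntegral.integral_neg] at h
  linarith

lemma zeroCoeff : ∫ τ in (0:ℝ)..(2*π), Real.log (4*Real.sin (τ/2)^2) = 0 := by
  set F : ℝ → ℝ := fun τ => Real.log (4*Real.sin (τ/2)^2) with hF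
  have hpi : (0:ℝ) ≤ π := pi_pos.le
  have hi1 : IntervalIntegrable F volume 0 π := by
    have := Fg_int (g := fun _ => (1:ℝ)) continuous_const (a := 0) (b := π)
      (by rw [uIcc_of_le hpi, uIcc_of_le (by positivity : (0:ℝ) ≤ 2*π)]
          exact Icc_subset_Icc le_rfl (by linarith))
    simpa [mul_one] using this
  have hi2 : IntervalIntegrable F volume π (2*π) := by
    have := Fg_int (g := fun _ => (1:ℝ)) continuous_const (a := π) (b := 2*π)
      (by rw [uIcc_of_le (by linarith : π ≤ 2*π), uIcc_of_le (by positivity : (0:ℝ) ≤ 2*π)]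
          exact Icc_subset_Icc hpi le_rfl)
    simpa [mul_one] using this
  have hi2' : IntervalIntegrable (fun τ => F (τ+π)) volume 0 π := by
    have h := hi2.comp_add_right π
    rw [sub_self, show 2*π - π = π by ring] at h
    exact h
  have step1 : ∫ τ in (0:ℝ)..(2*π), F τ
      = (∫ τ in (0:ℝ)..π, F τ) + ∫ τ in π..(2*π), F τ :=
    (integral_add_adjacent_intervals hi1 hi2).symm
  have step2 : ∫ τ in π..(2*π), F τ = ∫ τ in (0:ℝ)..π, F (τ+π) := by
    have h := intervalIntegral.integral_comp_add_right (a := (0:ℝ)) (b := π) F π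
    rw [zero_add, show π + π = 2*π by ring] at h
    exact h.symm
  have step3 : (∫ τ in (0:ℝ)..π, F τ) + (∫ τ in (0:ℝ)..π, F (τ+π))
      = ∫ τ in (0:ℝ)..π, (F τ + F (τ+π)) := (integral_add hi1 hi2').symm
  have step4 : ∫ τ in (0:ℝ)..π, (F τ + F (τ+π)) = ∫ τ in (0:ℝ)..π, F (2*τ) := by
    refine intervalIntegral.integral_congr_ae ?_
    have hae : ∀ᵐ (x:ℝ), x ≠ π := by
      rw [MeasureTheory.ae_iff]
      have hset : {a : ℝ | ¬ a ≠ π} = {π} := by ext a; simp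
      rw [hset]
      exact measure_singleton π
    filter_upwards [hae] with τ hτ hmem
    rw [uIoc_of_le hpi] at hmem
    have h0 : 0 < τ := hmem.1
    have hπ2 : τ < π := lt_of_le_of_ne hmem.2 hτ
    have hs : 0 < Real.sin (τ/2) :=
      Real.sin_pos_of_pos_of_lt_pi (by linarith) (by linarith)
    have hc : 0 < Real.cos (τ/2) :=
      Real.cos_pos_of_mem_Ioo ⟨by linarith [pi_pos], by linarith⟩
    rw [hF]
    simp only []
    rw [show (τ+π)/2 = τ/2 + π/2 by ring, Real.sin_add_pi_div_two,
        show (2*τ)/2 = τ by ring]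
    have hsin : Real.sin τ = 2*Real.sin (τ/2)*Real.cos (τ/2) := by
      nth_rewrite 1 [show τ = 2*(τ/2) by ring]
      exact Real.sin_two_mul (τ/2)
    rw [← Real.log_mul (by positivity) (by positivity), hsin]
    congr 1
    ring
  have step5 : 2 * ∫ τ in (0:ℝ)..π, F (2*τ) = ∫ τ in (0:ℝ)..(2*π), F τ := by
    have h := intervalIntegral.mul_integral_comp_mul_left (a := (0:ℝ)) (b := π) (f := F) 2
    rw [mul_zero] at h
    exact h
  have : ∫ τ in (0:ℝ)..(2*π), F τ = ∫ τ in (0:ℝ)..π, F (2*τ) := by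
    rw [step1, step2, step3, step4]
  linarith


lemma conv_generic (t : ℝ) (m : ℕ) (f : ℝ → ℝ)
    (hf : (∀ τ, f τ = Real.cos ((m:ℝ)*τ)) ∨ (∀ τ, f τ = Real.sin ((m:ℝ)*τ))) :
    ∫ τ in (0:ℝ)..(2*π), Real.log (4*Real.sin ((t-τ)/2)^2) * f τ
      = ∫ s in (0:ℝ)..(2*π), Real.log (4*Real.sin (s/2)^2) * f (t - s) := by
  set G : ℝ → ℝ := fun s => Real.log (4*Real.sin (s/2)^2) * f (t - s) with hG
  have h1 : (∫ τ in (0:ℝ)..(2*π), Real.log (4*Real.sin ((t-τ)/2)^2) * f τ)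
      = ∫ τ in (0:ℝ)..(2*π), G (t - τ) := by
    refine intervalIntegral.integral_congr ?_
    intro τ _
    simp only [hG]
    rw [show t - (t - τ) = τ by ring]
  have h2 := intervalIntegral.integral_comp_sub_left (a := (0:ℝ)) (b := 2*π) G t
  rw [sub_zero] at h2
  have hper : Function.Periodic G (2*π) := by
    intro s
    simp only [hG]
    have hfp : f (t - (s + 2*π)) = f (t - s) := by
      rcases hf with hf | hf
      · rw [hf, hf, show (m:ℝ)*(t - (s + 2*π)) = (m:ℝ)*(t-s) - (m:ℝ)*(2*π) by ring,
          Real.cos_sub, Real.cos_nat_mul_two_pi, sin_nat_two_pi]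
        ring
      · rw [hf, hf, show (m:ℝ)*(t - (s + 2*π)) = (m:ℝ)*(t-s) - (m:ℝ)*(2*π) by ring,
          Real.sin_sub, Real.cos_nat_mul_two_pi, sin_nat_two_pi]
        ring
    rw [hfp, show (s + 2*π)/2 = s/2 + π by ring, Real.sin_add_pi]
    ring_nf
  have h3 := hper.intervalIntegral_add_eq (t - 2*π) 0
  rw [show t - 2*π + 2*π = t by ring, zero_add] at h3
  rw [h1, h2, h3]

lemma conv_cos (t : ℝ) (m : ℕ) :
    ∫ τ in (0:ℝ)..(2*π), Real.log (4*Real.sin ((t-τ)/2)^2) * Real.cos ((m:ℝ)*τ)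
      = Real.cos ((m:ℝ)*t) *
          (∫ s in (0:ℝ)..(2*π), Real.log (4*Real.sin (s/2)^2) * Real.cos ((m:ℝ)*s))
        + Real.sin ((m:ℝ)*t) *
          (∫ s in (0:ℝ)..(2*π), Real.log (4*Real.sin (s/2)^2) * Real.sin ((m:ℝ)*s)) := by
  rw [conv_generic t m _ (Or.inl (fun τ => rfl))]
  have hexp : ∀ s : ℝ, Real.log (4*Real.sin (s/2)^2) * Real.cos ((m:ℝ)*(t - s))
      = Real.cos ((m:ℝ)*t) * (Real.log (4*Real.sin (s/2)^2) * Real.cos ((m:ℝ)*s))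
        + Real.sin ((m:ℝ)*t) * (Real.log (4*Real.sin (s/2)^2) * Real.sin ((m:ℝ)*s)) := by
    intro s
    rw [show (m:ℝ)*(t - s) = (m:ℝ)*t - (m:ℝ)*s by ring, Real.cos_sub]
    ring
  rw [intervalIntegral.integral_congr (g := fun s =>
      Real.cos ((m:ℝ)*t) * (Real.log (4*Real.sin (s/2)^2) * Real.cos ((m:ℝ)*s))
        + Real.sin ((m:ℝ)*t) * (Real.log (4*Real.sin (s/2)^2) * Real.sin ((m:ℝ)*s)))
      (fun s _ => hexp s)]
  rw [intervalIntegral.integral_add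
      ((Fg_int (by fun_prop) subset_rfl).const_mul _)
      ((Fg_int (by fun_prop) subset_rfl).const_mul _),
    intervalIntegral.integral_const_mul, intervalIntegral.integral_const_mul]

lemma conv_sin (t : ℝ) (m : ℕ) :
    ∫ τ in (0:ℝ)..(2*π), Real.log (4*Real.sin ((t-τ)/2)^2) * Real.sin ((m:ℝ)*τ)
      = Real.sin ((m:ℝ)*t) *
          (∫ s in (0:ℝ)..(2*π), Real.log (4*Real.sin (s/2)^2) * Real.cos ((m:ℝ)*s))
        - Real.cos ((m:ℝ)*t) *
          (∫ s in (0:ℝ)..(2*π), Real.log (4*Real.sin (s/2)^2) * Real.sin ((m:ℝ)*s)) := by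
  rw [conv_generic t m _ (Or.inr (fun τ => rfl))]
  have hexp : ∀ s : ℝ, Real.log (4*Real.sin (s/2)^2) * Real.sin ((m:ℝ)*(t - s))
      = Real.sin ((m:ℝ)*t) * (Real.log (4*Real.sin (s/2)^2) * Real.cos ((m:ℝ)*s))
        + (-Real.cos ((m:ℝ)*t)) * (Real.log (4*Real.sin (s/2)^2) * Real.sin ((m:ℝ)*s)) := by
    intro s
    rw [show (m:ℝ)*(t - s) = (m:ℝ)*t - (m:ℝ)*s by ring, Real.sin_sub]
    ring
  rw [intervalIntegral.integral_congr (g := fun s =>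
      Real.sin ((m:ℝ)*t) * (Real.log (4*Real.sin (s/2)^2) * Real.cos ((m:ℝ)*s))
        + (-Real.cos ((m:ℝ)*t)) * (Real.log (4*Real.sin (s/2)^2) * Real.sin ((m:ℝ)*s)))
      (fun s _ => hexp s)]
  rw [intervalIntegral.integral_add
      ((Fg_int (by fun_prop) subset_rfl).const_mul _)
      ((Fg_int (by fun_prop) subset_rfl).const_mul _),
    intervalIntegral.integral_const_mul, intervalIntegral.integral_const_mul]
  ring


lemma not_dvd_helper (n : ℕ) (z : ℤ) (h0 : z ≠ 0) (habs : |z| < 2*(n:ℤ)) :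
    ¬ ((2*(n:ℤ)) ∣ z) := by
  intro hd
  have h1 : (2*(n:ℤ)) ∣ |z| := (dvd_abs _ _).mpr hd
  have h2 := Int.le_of_dvd (abs_pos.mpr h0) h1
  linarith

lemma exp_sum_zero (n : ℕ) (hn : 1 ≤ n) (z : ℤ) (hz : ¬ ((2*(n:ℤ)) ∣ z)) (a : ℝ) :
    ∑ i ∈ Finset.range (2*n),
      Complex.exp (((a - (z:ℝ)*((i:ℝ)*π/n)) : ℝ) * Complex.I) = 0 := by
  have hn0 : (n:ℝ) ≠ 0 := Nat.cast_ne_zero.mpr (by omega)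
  have hn0' : (n:ℂ) ≠ 0 := Nat.cast_ne_zero.mpr (by omega)
  set r : ℂ := Complex.exp (((-(z:ℝ)*π/n : ℝ)) * Complex.I) with hr
  have hterm : ∀ i : ℕ, Complex.exp (((a - (z:ℝ)*((i:ℝ)*π/n)) : ℝ) * Complex.I)
      = Complex.exp ((a:ℝ) * Complex.I) * r ^ i := by
    intro i
    rw [hr, ← Complex.exp_nat_mul, ← Complex.exp_add]
    congr 1
    push_cast
    ring
  have hr1 : r ≠ 1 := by
    rw [hr]
    intro hcon
    rw [Complex.exp_eq_one_iff] at hcon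
    obtain ⟨k, hk⟩ := hcon
    have hk' : ((-(z:ℝ)*π/n : ℝ) : ℂ) = (k:ℂ)*(2*(π:ℂ)) := by
      refine mul_right_cancel₀ Complex.I_ne_zero ?_
      rw [hk]; ring
    have hkr : (-(z:ℝ)*π/n : ℝ) = (k:ℝ)*(2*π) := by exact_mod_cast hk'
    have h3 : (-(z:ℝ))*π = ((k:ℝ)*(2*π))*n := by
      have := congrArg (fun x : ℝ => x * n) hkr
      simpa [div_mul_cancel₀, hn0] using this
    have h5 : (-(z:ℝ))*π = (2*(k:ℝ)*(n:ℝ))*π := by rw [h3]; ring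
    have h6 : (-(z:ℝ)) = 2*(k:ℝ)*(n:ℝ) := mul_right_cancel₀ Real.pi_ne_zero h5
    apply hz
    refine ⟨-k, ?_⟩
    have : (z:ℝ) = ((2*(n:ℤ)*(-k) : ℤ) : ℝ) := by push_cast; linarith
    exact_mod_cast this
  have hrpow : r ^ (2*n) = 1 := by
    rw [hr, ← Complex.exp_nat_mul]
    have harg : ((2*n : ℕ) : ℂ) * (((-(z:ℝ)*π/n : ℝ) : ℂ) * Complex.I)
        = ((-z : ℤ) : ℂ) * (2*(π:ℂ)*Complex.I) := by
      push_cast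
      field_simp
    rw [harg]
    exact_mod_cast Complex.exp_int_mul_two_pi_mul_I (-z)
  calc ∑ i ∈ Finset.range (2*n),
        Complex.exp (((a - (z:ℝ)*((i:ℝ)*π/n)) : ℝ) * Complex.I)
      = ∑ i ∈ Finset.range (2*n), Complex.exp ((a:ℝ) * Complex.I) * r ^ i := by
        exact Finset.sum_congr rfl (fun i _ => hterm i)
    _ = Complex.exp ((a:ℝ) * Complex.I) * ∑ i ∈ Finset.range (2*n), r ^ i := by
        rw [Finset.mul_sum]
    _ = 0 := by
        rw [geom_sum_eq hr1, hrpow]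
        simp

lemma cos_sum_zero (n : ℕ) (hn : 1 ≤ n) (z : ℤ) (hz : ¬ ((2*(n:ℤ)) ∣ z)) (a : ℝ) :
    ∑ i ∈ Finset.range (2*n), Real.cos (a - (z:ℝ)*((i:ℝ)*π/n)) = 0 := by
  have h := exp_sum_zero n hn z hz a
  have h2 : ∑ i ∈ Finset.range (2*n), Real.cos (a - (z:ℝ)*((i:ℝ)*π/n))
      = (∑ i ∈ Finset.range (2*n),
          Complex.exp (((a - (z:ℝ)*((i:ℝ)*π/n)) : ℝ) * Complex.I)).re := by
    rw [Complex.re_sum]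
    exact Finset.sum_congr rfl (fun i _ => (Complex.exp_ofReal_mul_I_re _).symm)
  rw [h2, h, Complex.zero_re]

lemma sin_sum_zero (n : ℕ) (hn : 1 ≤ n) (z : ℤ) (hz : ¬ ((2*(n:ℤ)) ∣ z)) (a : ℝ) :
    ∑ i ∈ Finset.range (2*n), Real.sin (a - (z:ℝ)*((i:ℝ)*π/n)) = 0 := by
  have h := exp_sum_zero n hn z hz a
  have h2 : ∑ i ∈ Finset.range (2*n), Real.sin (a - (z:ℝ)*((i:ℝ)*π/n))
      = (∑ i ∈ Finset.range (2*n),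
          Complex.exp (((a - (z:ℝ)*((i:ℝ)*π/n)) : ℝ) * Complex.I)).im := by
    rw [Complex.im_sum]
    exact Finset.sum_congr rfl (fun i _ => (Complex.exp_ofReal_mul_I_im _).symm)
  rw [h2, h, Complex.zero_im]


lemma disc_cos_cos (n : ℕ) (hn : 1 ≤ n) (t : ℝ) (k m : ℕ)
    (hk1 : 1 ≤ k) (hk2 : k ≤ n-1) (hm : m ≤ n-1) :
    ∑ i ∈ Finset.range (2*n),
        Real.cos ((k:ℝ)*(t - ((i:ℝ)*π/n))) * Real.cos ((m:ℝ)*((i:ℝ)*π/n))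
      = if k = m then (n:ℝ) * Real.cos ((m:ℝ)*t) else 0 := by
  have hpt : ∀ x:ℝ, Real.cos ((k:ℝ)*(t-x)) * Real.cos ((m:ℝ)*x)
      = (Real.cos ((k:ℝ)*t - (((k:ℤ)+(m:ℤ) : ℤ):ℝ)*x)
        + Real.cos ((k:ℝ)*t - (((k:ℤ)-(m:ℤ) : ℤ):ℝ)*x))/2 := by
    intro x
    rw [show (k:ℝ)*t - (((k:ℤ)+(m:ℤ):ℤ):ℝ)*x = ((k:ℝ)*(t-x)) - (m:ℝ)*x by push_cast; ring,
       show (k:ℝ)*t - (((k:ℤ)-(m:ℤ):ℤ):ℝ)*x = ((k:ℝ)*(t-x)) + (m:ℝ)*x by push_cast; ring,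
       Real.cos_sub, Real.cos_add]
    ring
  simp only [hpt]
  rw [← Finset.sum_div, Finset.sum_add_distrib]
  have hsum1 : ∑ i ∈ Finset.range (2*n),
      Real.cos ((k:ℝ)*t - (((k:ℤ)+(m:ℤ) : ℤ):ℝ)*((i:ℝ)*π/n)) = 0 := by
    refine cos_sum_zero n hn _ (not_dvd_helper n _ (by omega) ?_) _
    have : ((k:ℤ)+(m:ℤ)) ≥ 0 := by positivity
    rw [abs_of_nonneg this]
    have hkn : (k:ℤ) ≤ (n:ℤ)-1 := by exact_mod_cast (by omega : (k:ℤ) ≤ (n:ℤ)-1)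
    omega
  rw [hsum1, zero_add]
  by_cases hkm : k = m
  · subst hkm
    rw [if_pos rfl]
    have hz : (((k:ℤ)-(k:ℤ) : ℤ):ℝ) = 0 := by rw [sub_self]; simp
    have : ∀ i ∈ Finset.range (2*n), Real.cos ((k:ℝ)*t - (((k:ℤ)-(k:ℤ) : ℤ):ℝ)*((i:ℝ)*π/n))
        = Real.cos ((k:ℝ)*t) := by
      intro i _
      rw [hz, zero_mul, sub_zero]
    rw [Finset.sum_congr rfl this, Finset.sum_const, Finset.card_range]
    ring
  · rw [if_neg hkm]
    have hsum2 : ∑ i ∈ Finset.range (2*n),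
        Real.cos ((k:ℝ)*t - (((k:ℤ)-(m:ℤ) : ℤ):ℝ)*((i:ℝ)*π/n)) = 0 := by
      refine cos_sum_zero n hn _ (not_dvd_helper n _ (by omega) ?_) _
      rw [abs_lt]
      constructor <;> omega
    rw [hsum2]
    norm_num

lemma disc_cos_sin (n : ℕ) (hn : 1 ≤ n) (t : ℝ) (k m : ℕ)
    (hk1 : 1 ≤ k) (hk2 : k ≤ n-1) (hm : m ≤ n-1) :
    ∑ i ∈ Finset.range (2*n),
        Real.cos ((k:ℝ)*(t - ((i:ℝ)*π/n))) * Real.sin ((m:ℝ)*((i:ℝ)*π/n))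
      = if k = m then (n:ℝ) * Real.sin ((m:ℝ)*t) else 0 := by
  have hpt : ∀ x:ℝ, Real.cos ((k:ℝ)*(t-x)) * Real.sin ((m:ℝ)*x)
      = (Real.sin ((k:ℝ)*t - (((k:ℤ)-(m:ℤ) : ℤ):ℝ)*x)
        - Real.sin ((k:ℝ)*t - (((k:ℤ)+(m:ℤ) : ℤ):ℝ)*x))/2 := by
    intro x
    rw [show (k:ℝ)*t - (((k:ℤ)-(m:ℤ):ℤ):ℝ)*x = ((k:ℝ)*(t-x)) + (m:ℝ)*x by push_cast; ring,
       show (k:ℝ)*t - (((k:ℤ)+(m:ℤ):ℤ):ℝ)*x = ((k:ℝ)*(t-x)) - (m:ℝ)*x by push_cast; ring,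
       Real.sin_add, Real.sin_sub]
    ring
  simp only [hpt]
  rw [← Finset.sum_div, Finset.sum_sub_distrib]
  have hsum1 : ∑ i ∈ Finset.range (2*n),
      Real.sin ((k:ℝ)*t - (((k:ℤ)+(m:ℤ) : ℤ):ℝ)*((i:ℝ)*π/n)) = 0 := by
    refine sin_sum_zero n hn _ (not_dvd_helper n _ (by omega) ?_) _
    have : ((k:ℤ)+(m:ℤ)) ≥ 0 := by positivity
    rw [abs_of_nonneg this]
    omega
  rw [hsum1, sub_zero]
  by_cases hkm : k = m
  · subst hkm
    rw [if_pos rfl]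
    have hz : (((k:ℤ)-(k:ℤ) : ℤ):ℝ) = 0 := by rw [sub_self]; simp
    have : ∀ i ∈ Finset.range (2*n), Real.sin ((k:ℝ)*t - (((k:ℤ)-(k:ℤ) : ℤ):ℝ)*((i:ℝ)*π/n))
        = Real.sin ((k:ℝ)*t) := by
      intro i _
      rw [hz, zero_mul, sub_zero]
    rw [Finset.sum_congr rfl this, Finset.sum_const, Finset.card_range]
    ring
  · rw [if_neg hkm]
    have hsum2 : ∑ i ∈ Finset.range (2*n),
        Real.sin ((k:ℝ)*t - (((k:ℤ)-(m:ℤ) : ℤ):ℝ)*((i:ℝ)*π/n)) = 0 := by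
      refine sin_sum_zero n hn _ (not_dvd_helper n _ (by omega) ?_) _
      rw [abs_lt]
      constructor <;> omega
    rw [hsum2]
    norm_num

lemma disc_n_cos (n : ℕ) (hn : 1 ≤ n) (t : ℝ) (m : ℕ) (hm : m ≤ n-1) :
    ∑ i ∈ Finset.range (2*n),
        Real.cos ((n:ℝ)*(t - ((i:ℝ)*π/n))) * Real.cos ((m:ℝ)*((i:ℝ)*π/n)) = 0 := by
  have hpt : ∀ x:ℝ, Real.cos ((n:ℝ)*(t-x)) * Real.cos ((m:ℝ)*x)
      = (Real.cos ((n:ℝ)*t - (((n:ℤ)+(m:ℤ) : ℤ):ℝ)*x)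
        + Real.cos ((n:ℝ)*t - (((n:ℤ)-(m:ℤ) : ℤ):ℝ)*x))/2 := by
    intro x
    rw [show (n:ℝ)*t - (((n:ℤ)+(m:ℤ):ℤ):ℝ)*x = ((n:ℝ)*(t-x)) - (m:ℝ)*x by push_cast; ring,
       show (n:ℝ)*t - (((n:ℤ)-(m:ℤ):ℤ):ℝ)*x = ((n:ℝ)*(t-x)) + (m:ℝ)*x by push_cast; ring,
       Real.cos_sub, Real.cos_add]
    ring
  simp only [hpt]
  rw [← Finset.sum_div, Finset.sum_add_distrib]
  have hsum1 : ∑ i ∈ Finset.range (2*n),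
      Real.cos ((n:ℝ)*t - (((n:ℤ)+(m:ℤ) : ℤ):ℝ)*((i:ℝ)*π/n)) = 0 := by
    refine cos_sum_zero n hn _ (not_dvd_helper n _ (by omega) ?_) _
    have : ((n:ℤ)+(m:ℤ)) ≥ 0 := by positivity
    rw [abs_of_nonneg this]
    omega
  have hsum2 : ∑ i ∈ Finset.range (2*n),
      Real.cos ((n:ℝ)*t - (((n:ℤ)-(m:ℤ) : ℤ):ℝ)*((i:ℝ)*π/n)) = 0 := by
    refine cos_sum_zero n hn _ (not_dvd_helper n _ (by omega) ?_) _
    rw [abs_lt]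
    constructor <;> omega
  rw [hsum1, hsum2]
  norm_num

lemma disc_n_sin (n : ℕ) (hn : 1 ≤ n) (t : ℝ) (m : ℕ) (hm : m ≤ n-1) :
    ∑ i ∈ Finset.range (2*n),
        Real.cos ((n:ℝ)*(t - ((i:ℝ)*π/n))) * Real.sin ((m:ℝ)*((i:ℝ)*π/n)) = 0 := by
  have hpt : ∀ x:ℝ, Real.cos ((n:ℝ)*(t-x)) * Real.sin ((m:ℝ)*x)
      = (Real.sin ((n:ℝ)*t - (((n:ℤ)-(m:ℤ) : ℤ):ℝ)*x)
        - Real.sin ((n:ℝ)*t - (((n:ℤ)+(m:ℤ) : ℤ):ℝ)*x))/2 := by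
    intro x
    rw [show (n:ℝ)*t - (((n:ℤ)-(m:ℤ):ℤ):ℝ)*x = ((n:ℝ)*(t-x)) + (m:ℝ)*x by push_cast; ring,
       show (n:ℝ)*t - (((n:ℤ)+(m:ℤ):ℤ):ℝ)*x = ((n:ℝ)*(t-x)) - (m:ℝ)*x by push_cast; ring,
       Real.sin_add, Real.sin_sub]
    ring
  simp only [hpt]
  rw [← Finset.sum_div, Finset.sum_sub_distrib]
  have hsum1 : ∑ i ∈ Finset.range (2*n),
      Real.sin ((n:ℝ)*t - (((n:ℤ)+(m:ℤ) : ℤ):ℝ)*((i:ℝ)*π/n)) = 0 := by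
    refine sin_sum_zero n hn _ (not_dvd_helper n _ (by omega) ?_) _
    have : ((n:ℤ)+(m:ℤ)) ≥ 0 := by positivity
    rw [abs_of_nonneg this]
    omega
  have hsum2 : ∑ i ∈ Finset.range (2*n),
      Real.sin ((n:ℝ)*t - (((n:ℤ)-(m:ℤ) : ℤ):ℝ)*((i:ℝ)*π/n)) = 0 := by
    refine sin_sum_zero n hn _ (not_dvd_helper n _ (by omega) ?_) _
    rw [abs_lt]
    constructor <;> omega
  rw [hsum1, hsum2]
  norm_num


lemma Ccoeff (m : ℕ) :
    ∫ s in (0:ℝ)..(2*π), Real.log (4*Real.sin (s/2)^2) * Real.cos ((m:ℝ)*s)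
      = if m = 0 then 0 else -(2*π/m) := by
  rcases Nat.eq_zero_or_pos m with h0 | hpos
  · subst h0
    rw [if_pos rfl]
    have : ∀ s : ℝ, Real.log (4*Real.sin (s/2)^2) * Real.cos (((0:ℕ):ℝ)*s)
        = Real.log (4*Real.sin (s/2)^2) := by
      intro s; simp
    rw [intervalIntegral.integral_congr (fun s _ => this s)]
    exact zeroCoeff
  · rw [if_neg (by omega)]
    exact cosCoeff m hpos

end Stmt16

open Real in
theorem stmt_16 (n : ℕ) (hn : 1 ≤ n) (t : ℝ)
    (tn : ℕ → ℝ) (htn : ∀ i, tn i = (i : ℝ) * π / n)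
    (R : ℕ → ℝ → ℝ)
    (hR : ∀ i s, R i s =
      -(2 * π / n) * ∑ m ∈ Finset.Icc 1 (n - 1), (1 / (m : ℝ)) * Real.cos (m * (s - tn i))
      - (π / (n : ℝ)^2) * Real.cos (n * (s - tn i)))
    (m : ℕ) (hm : m ≤ n - 1) (f : ℝ → ℝ)
    (hf : (∀ τ, f τ = Real.cos (m * τ)) ∨ (∀ τ, f τ = Real.sin (m * τ))) :
    ∑ i ∈ Finset.range (2 * n), R i t * f (tn i) =
      ∫ τ in (0:ℝ)..(2 * π), Real.log (4 * Real.sin ((t - τ) / 2)^2) * f τ := by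
  have hn0 : (n:ℝ) ≠ 0 := Nat.cast_ne_zero.mpr (by omega)
  -- LHS structure
  have hsummand : ∀ i : ℕ, R i t * f (tn i)
      = -(2*π/(n:ℝ)) * ∑ k ∈ Finset.Icc 1 (n-1),
          (1/(k:ℝ)) * (Real.cos ((k:ℝ)*(t - (i:ℝ)*π/n)) * f ((i:ℝ)*π/n))
        - (π/(n:ℝ)^2) * (Real.cos ((n:ℝ)*(t - (i:ℝ)*π/n)) * f ((i:ℝ)*π/n)) := by
    intro i
    rw [hR i t, htn i]
    have e1 : (∑ k ∈ Finset.Icc 1 (n-1), (1/(k:ℝ)) * Real.cos ((k:ℝ)*(t - (i:ℝ)*π/n)))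
          * f ((i:ℝ)*π/n)
        = ∑ k ∈ Finset.Icc 1 (n-1),
          (1/(k:ℝ)) * (Real.cos ((k:ℝ)*(t - (i:ℝ)*π/n)) * f ((i:ℝ)*π/n)) := by
      rw [Finset.sum_mul]
      exact Finset.sum_congr rfl (fun k _ => by ring)
    calc (-(2*π/(n:ℝ)) * ∑ k ∈ Finset.Icc 1 (n-1),
            (1/(k:ℝ)) * Real.cos ((k:ℝ)*(t - (i:ℝ)*π/n))
          - (π/(n:ℝ)^2) * Real.cos ((n:ℝ)*(t - (i:ℝ)*π/n))) * f ((i:ℝ)*π/n)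
        = -(2*π/(n:ℝ)) * ((∑ k ∈ Finset.Icc 1 (n-1),
            (1/(k:ℝ)) * Real.cos ((k:ℝ)*(t - (i:ℝ)*π/n))) * f ((i:ℝ)*π/n))
          - (π/(n:ℝ)^2) * (Real.cos ((n:ℝ)*(t - (i:ℝ)*π/n)) * f ((i:ℝ)*π/n)) := by ring
      _ = _ := by rw [e1]
  rw [Finset.sum_congr rfl (fun i _ => hsummand i), Finset.sum_sub_distrib]
  rw [← Finset.mul_sum, ← Finset.mul_sum]
  rw [Finset.sum_comm]
  -- the n-frequency term and the inner sums
  rcases hf with hfc | hfs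
  · -- cosine case
    have hfeq : ∀ x : ℝ, f x = Real.cos ((m:ℝ)*x) := hfc
    have hnterm : ∑ i ∈ Finset.range (2*n),
        Real.cos ((n:ℝ)*(t - (i:ℝ)*π/n)) * f ((i:ℝ)*π/n) = 0 := by
      rw [Finset.sum_congr rfl (fun i _ => by rw [hfeq])]
      exact Stmt16.disc_n_cos n hn t m hm
    have hinner : ∀ k ∈ Finset.Icc 1 (n-1),
        ∑ i ∈ Finset.range (2*n),
          (1/(k:ℝ)) * (Real.cos ((k:ℝ)*(t - (i:ℝ)*π/n)) * f ((i:ℝ)*π/n))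
        = if k = m then (1/(k:ℝ)) * ((n:ℝ) * Real.cos ((m:ℝ)*t)) else 0 := by
      intro k hk
      obtain ⟨hk1, hk2⟩ := Finset.mem_Icc.mp hk
      rw [← Finset.mul_sum, Finset.sum_congr rfl (fun i _ => by rw [hfeq]),
        Stmt16.disc_cos_cos n hn t k m hk1 hk2 hm]
      simp [mul_ite]
    rw [Finset.sum_congr rfl hinner, Finset.sum_ite_eq' (Finset.Icc 1 (n-1)) m]
    -- RHS
    rw [intervalIntegral.integral_congr
        (g := fun τ => Real.log (4*Real.sin ((t-τ)/2)^2) * Real.cos ((m:ℝ)*τ))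
        (fun τ _ => by rw [hfeq])]
    rw [Stmt16.conv_cos t m, Stmt16.Ccoeff, Stmt16.sinCoeff]
    rcases Nat.eq_zero_or_pos m with h0 | hpos
    · subst h0
      rw [if_neg (by simp), if_pos rfl]
      simp [hnterm]
    · have hmmem : m ∈ Finset.Icc 1 (n-1) := Finset.mem_Icc.mpr ⟨hpos, hm⟩
      rw [if_pos hmmem, if_neg (by omega)]
      have hm0 : (m:ℝ) ≠ 0 := Nat.cast_ne_zero.mpr (by omega)
      rw [hnterm]
      field_simp
      ring
  · -- sine case
    have hfeq : ∀ x : ℝ, f x = Real.sin ((m:ℝ)*x) := hfs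
    have hnterm : ∑ i ∈ Finset.range (2*n),
        Real.cos ((n:ℝ)*(t - (i:ℝ)*π/n)) * f ((i:ℝ)*π/n) = 0 := by
      rw [Finset.sum_congr rfl (fun i _ => by rw [hfeq])]
      exact Stmt16.disc_n_sin n hn t m hm
    have hinner : ∀ k ∈ Finset.Icc 1 (n-1),
        ∑ i ∈ Finset.range (2*n),
          (1/(k:ℝ)) * (Real.cos ((k:ℝ)*(t - (i:ℝ)*π/n)) * f ((i:ℝ)*π/n))
        = if k = m then (1/(k:ℝ)) * ((n:ℝ) * Real.sin ((m:ℝ)*t)) else 0 := by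
      intro k hk
      obtain ⟨hk1, hk2⟩ := Finset.mem_Icc.mp hk
      rw [← Finset.mul_sum, Finset.sum_congr rfl (fun i _ => by rw [hfeq]),
        Stmt16.disc_cos_sin n hn t k m hk1 hk2 hm]
      simp [mul_ite]
    rw [Finset.sum_congr rfl hinner, Finset.sum_ite_eq' (Finset.Icc 1 (n-1)) m]
    rw [intervalIntegral.integral_congr
        (g := fun τ => Real.log (4*Real.sin ((t-τ)/2)^2) * Real.sin ((m:ℝ)*τ))
        (fun τ _ => by rw [hfeq])]
    rw [Stmt16.conv_sin t m, Stmt16.Ccoeff, Stmt16.sinCoeff]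
    rcases Nat.eq_zero_or_pos m with h0 | hpos
    · subst h0
      rw [if_neg (by simp), if_pos rfl]
      simp [hnterm]
    · have hmmem : m ∈ Finset.Icc 1 (n-1) := Finset.mem_Icc.mpr ⟨hpos, hm⟩
      rw [if_pos hmmem, if_neg (by omega)]
      have hm0 : (m:ℝ) ≠ 0 := Nat.cast_ne_zero.mpr (by omega)
      rw [hnterm]
      field_simp
      ring
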